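/- For all n ≥ 1 and all 0 ≤ γ ≤ 1, the ratio ((1+2γ−γ²)/2·n² + (1+γ)/2·n) / ((γ²+1)/2·n² + (1+γ)/2·n) is strictly less than √2, and for γ as close as possible to √2−1 (a multiple of 1/n), the ratio tends to √2 as n → ∞. -/

import Mathlib

open Filter Real Topology

theorem adversary_ratio_lt_sqrt_two_and_tends_to_sqrt_two :
    (∀ n : ℕ, 1 ≤ n → ∀ γ : ℝ, 0 ≤ γ → γ ≤ 1 →
      ((1 + 2 * γ - γ ^ 2) / 2 * (n : ℝ) ^ 2 + (1 + γ) / 2 * n) /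
        ((γ ^ 2 + 1) / 2 * (n : ℝ) ^ 2 + (1 + γ) / 2 * n) < Real.sqrt 2) ∧
    (∀ γseq : ℕ → ℝ,
      (∀ n : ℕ, 1 ≤ n → |γseq n - (Real.sqrt 2 - 1)| ≤ 1 / n) →
      Filter.Tendsto
        (fun n : ℕ =>
          ((1 + 2 * γseq n - (γseq n) ^ 2) / 2 * (n : ℝ) ^ 2 + (1 + γseq n) / 2 * n) /
            (((γseq n) ^ 2 + 1) / 2 * (n : ℝ) ^ 2 + (1 + γseq n) / 2 * n))
        Filter.atTop (nhds (Real.sqrt 2))) := by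
  have hs2 : Real.sqrt 2 ^ 2 = 2 := Real.sq_sqrt (by norm_num)
  have hs0 : (0:ℝ) ≤ Real.sqrt 2 := Real.sqrt_nonneg 2
  have hs1 : 1 < Real.sqrt 2 := by nlinarith
  constructor
  · intro n hn γ hγ0 hγ1
    have hn1 : (1:ℝ) ≤ (n:ℝ) := by exact_mod_cast hn
    have hn2 : (1:ℝ) ≤ (n:ℝ)^2 := by nlinarith
    have hD : 0 < (γ ^ 2 + 1) / 2 * (n : ℝ) ^ 2 + (1 + γ) / 2 * n := by
      nlinarith [sq_nonneg γ]
    rw [div_lt_iff₀ hD]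
    have key : (1 + 2 * γ - γ ^ 2) ≤ Real.sqrt 2 * (γ ^ 2 + 1) := by
      nlinarith [mul_nonneg (by linarith : (0:ℝ) ≤ Real.sqrt 2 + 1)
        (sq_nonneg (γ - (Real.sqrt 2 - 1)))]
    have k2 := mul_le_mul_of_nonneg_right key (sq_nonneg ((n:ℝ)))
    have hpos : 0 < (1 + γ) * (n:ℝ) :=
      mul_pos (by linarith) (by linarith)
    have k3 : (1 + γ) * (n:ℝ) < Real.sqrt 2 * ((1 + γ) * (n:ℝ)) := by
      nlinarith [mul_pos (sub_pos.2 hs1) hpos]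
    nlinarith [k2, k3]
  · intro γseq hγ
    set a : ℝ := Real.sqrt 2 - 1 with ha
    have hga : Tendsto γseq atTop (𝓝 a) := by
      have h0 : Tendsto (fun n : ℕ => γseq n - a) atTop (𝓝 0) := by
        apply squeeze_zero_norm' ?_ tendsto_one_div_atTop_nhds_zero_nat
        filter_upwards [eventually_ge_atTop 1] with n hn
        simpa [Real.norm_eq_abs] using hγ n hn
      have := h0.add_const a
      simpa using this
    have hinv : Tendsto (fun n : ℕ => 1 / (n:ℝ)) atTop (𝓝 0) :=
      tendsto_one_div_atTop_nhds_zero_nat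
    have hnum : Tendsto (fun n : ℕ => (1 + 2 * γseq n - (γseq n) ^ 2) / 2
        + (1 + γseq n) / 2 * (1 / (n:ℝ))) atTop
        (𝓝 ((1 + 2 * a - a ^ 2) / 2 + (1 + a) / 2 * 0)) := by
      exact (((tendsto_const_nhds.add (hga.const_mul 2)).sub (hga.pow 2)).div_const 2).add
        (((tendsto_const_nhds.add hga).div_const 2).mul hinv)
    have hden : Tendsto (fun n : ℕ => ((γseq n) ^ 2 + 1) / 2
        + (1 + γseq n) / 2 * (1 / (n:ℝ))) atTop
        (𝓝 ((a ^ 2 + 1) / 2 + (1 + a) / 2 * 0)) := by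
      exact (((hga.pow 2).add tendsto_const_nhds).div_const 2).add
        (((tendsto_const_nhds.add hga).div_const 2).mul hinv)
    have hden_ne : (a ^ 2 + 1) / 2 + (1 + a) / 2 * 0 ≠ 0 := by
      have : 0 < (a ^ 2 + 1) / 2 := by positivity
      simpa using this.ne'
    have hdiv := hnum.div hden hden_ne
    have hL : ((1 + 2 * a - a ^ 2) / 2 + (1 + a) / 2 * 0)
        / ((a ^ 2 + 1) / 2 + (1 + a) / 2 * 0) = Real.sqrt 2 := by
      rw [div_eq_iff hden_ne, ha]
      nlinarith [hs2]
    rw [hL] at hdiv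
    apply hdiv.congr'
    filter_upwards [eventually_ge_atTop 1] with n hn
    have hn0 : ((n:ℝ)) ≠ 0 := by
      have : (1:ℝ) ≤ (n:ℝ) := by exact_mod_cast hn
      linarith
    have h1 : (1 + 2 * γseq n - (γseq n) ^ 2) / 2 * (n : ℝ) ^ 2 + (1 + γseq n) / 2 * n
        = ((1 + 2 * γseq n - (γseq n) ^ 2) / 2 + (1 + γseq n) / 2 * (1 / (n:ℝ))) * (n:ℝ)^2 := by
      field_simp
    have h2 : ((γseq n) ^ 2 + 1) / 2 * (n : ℝ) ^ 2 + (1 + γseq n) / 2 * n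
        = (((γseq n) ^ 2 + 1) / 2 + (1 + γseq n) / 2 * (1 / (n:ℝ))) * (n:ℝ)^2 := by
      field_simp
    rw [h1, h2, mul_div_mul_right _ _ (pow_ne_zero 2 hn0)]
    simp [Pi.div_apply]
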